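/- Let α ∈ (0,1). For every s ≥ 0 there exists a unique c ∈ ℝ such that Φ(c+s) − Φ(−c) = 1−α; denote it c(s). Moreover c(0) = z_{1−α/2} and c(s) → z_{1−α} as s → ∞. -/

import Mathlib

open MeasureTheory ProbabilityTheory

/-- The standard normal cumulative distribution function `Φ`. -/
noncomputable def Phi (x : ℝ) : ℝ := (gaussianReal 0 1 (Set.Iic x)).toReal

open Filter

noncomputable def stdPdf : ℝ → ℝ := gaussianPDFReal 0 1

lemma stdPdf_pos (x : ℝ) : 0 < stdPdf x := gaussianPDFReal_pos 0 1 x one_ne_zero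

lemma stdPdf_integrable : Integrable stdPdf := integrable_gaussianPDFReal 0 1

lemma stdPdf_even (t : ℝ) : stdPdf (-t) = stdPdf t := by
  simp [stdPdf, gaussianPDFReal, neg_sq]

lemma Phi_eq_integral (x : ℝ) : Phi x = ∫ t in Set.Iic x, stdPdf t := by
  rw [Phi, gaussianReal_apply_eq_integral 0 one_ne_zero]
  exact ENNReal.toReal_ofReal (integral_nonneg fun t => (stdPdf_pos t).le)

lemma Phi_sub_Phi (a b : ℝ) : Phi b - Phi a = ∫ t in a..b, stdPdf t := by
  rw [Phi_eq_integral, Phi_eq_integral]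
  exact intervalIntegral.integral_Iic_sub_Iic stdPdf_integrable.integrableOn stdPdf_integrable.integrableOn

lemma Phi_strictMono : StrictMono Phi := by
  intro a b hab
  have : 0 < Phi b - Phi a := by
    rw [Phi_sub_Phi]
    exact intervalIntegral.intervalIntegral_pos_of_pos stdPdf_integrable.intervalIntegrable stdPdf_pos hab
  linarith

lemma Phi_continuous : Continuous Phi := by
  have : Phi = fun x => Phi 0 + ∫ t in (0:ℝ)..x, stdPdf t := by
    funext x
    rw [← Phi_sub_Phi]; ring
  rw [this]
  exact continuous_const.add
    (intervalIntegral.continuous_primitive (fun a b => stdPdf_integrable.intervalIntegrable) 0)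

lemma Phi_neg (x : ℝ) : Phi (-x) = 1 - Phi x := by
  have h1 : Phi (-x) = ∫ t in Set.Ioi x, stdPdf t := by
    rw [Phi_eq_integral]
    have := integral_comp_neg_Iic (-x) stdPdf
    rw [neg_neg] at this
    rw [← this]
    exact setIntegral_congr_fun measurableSet_Iic fun t _ => (stdPdf_even t).symm
  have h2 : Phi x + ∫ t in Set.Ioi x, stdPdf t = 1 := by
    rw [Phi_eq_integral,
      intervalIntegral.integral_Iic_add_Ioi stdPdf_integrable.integrableOn stdPdf_integrable.integrableOn]
    exact integral_gaussianPDFReal_eq_one 0 one_ne_zero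
  linarith

lemma Phi_tendsto_atTop : Tendsto Phi atTop (nhds 1) := by
  have : Phi = cdf (gaussianReal 0 1) := by
    funext x; rw [cdf_eq_real]; rfl
  rw [this]; exact tendsto_cdf_atTop _

lemma Phi_tendsto_atBot : Tendsto Phi atBot (nhds 0) := by
  have : Phi = cdf (gaussianReal 0 1) := by
    funext x; rw [cdf_eq_real]; rfl
  rw [this]; exact tendsto_cdf_atBot _

lemma Phi_le_one (x : ℝ) : Phi x ≤ 1 := by
  have : Phi = cdf (gaussianReal 0 1) := by
    funext x; rw [cdf_eq_real]; rfl
  rw [this]; exact cdf_le_one _ _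

/-- Well-posedness of the Imbens–Manski critical value: for `α ∈ (0,1)` and every `s ≥ 0`
there is a unique `c` with `Φ(c+s) - Φ(-c) = 1-α`; moreover `c(0) = z_{1-α/2}` and
`c(s) → z_{1-α}` as `s → ∞`, where `z_p = Φ⁻¹(p)`. -/
theorem imbens_manski_critical_value (α : ℝ) (hα : α ∈ Set.Ioo (0 : ℝ) 1)
    (z₁ z₂ : ℝ) (hz₁ : Phi z₁ = 1 - α) (hz₂ : Phi z₂ = 1 - α / 2) :
    (∀ s : ℝ, 0 ≤ s → ∃! c : ℝ, Phi (c + s) - Phi (-c) = 1 - α) ∧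
    ∀ cf : ℝ → ℝ,
      (∀ s : ℝ, 0 ≤ s → Phi (cf s + s) - Phi (-cf s) = 1 - α) →
      cf 0 = z₂ ∧ Tendsto cf atTop (nhds z₁) := by
  obtain ⟨hα0, hα1⟩ := hα
  have hmono : ∀ s : ℝ, StrictMono (fun c => Phi (c + s) - Phi (-c)) := by
    intro s a b hab
    have h1 : Phi (a + s) ≤ Phi (b + s) := Phi_strictMono.monotone (by linarith)
    have h2 : Phi (-b) < Phi (-a) := Phi_strictMono (by linarith)
    simp only
    linarith
  constructor
  · intro s hs
    set f : ℝ → ℝ := fun c => Phi (c + s) - Phi (-c) with hf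
    have hcont : Continuous f :=
      (Phi_continuous.comp (continuous_id.add continuous_const)).sub
        (Phi_continuous.comp continuous_neg)
    have htop : Tendsto f atTop (nhds 1) := by
      have h1 : Tendsto (fun c : ℝ => Phi (c + s)) atTop (nhds 1) :=
        Phi_tendsto_atTop.comp (tendsto_atTop_add_const_right _ s tendsto_id)
      have h2 : Tendsto (fun c : ℝ => Phi (-c)) atTop (nhds 0) :=
        Phi_tendsto_atBot.comp tendsto_neg_atTop_atBot
      simpa using h1.sub h2
    have hbot : Tendsto f atBot (nhds (-1)) := by
      have h1 : Tendsto (fun c : ℝ => Phi (c + s)) atBot (nhds 0) :=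
        Phi_tendsto_atBot.comp (tendsto_atBot_add_const_right _ s tendsto_id)
      have h2 : Tendsto (fun c : ℝ => Phi (-c)) atBot (nhds 1) :=
        Phi_tendsto_atTop.comp tendsto_neg_atBot_atTop
      simpa using h1.sub h2
    obtain ⟨a, ha⟩ := (hbot.eventually (eventually_lt_nhds (show (-1:ℝ) < 1 - α by linarith))).exists
    obtain ⟨b, hb⟩ := (htop.eventually (eventually_gt_nhds (show (1:ℝ) - α < 1 by linarith))).exists
    obtain ⟨c, hc⟩ := intermediate_value_univ₂ (a := a) (b := b) hcont
      continuous_const ha.le hb.le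
    exact ⟨c, hc, fun y hy => (hmono s).injective (show f y = f c from hy.trans hc.symm)⟩
  · intro cf hcf
    have h0 : cf 0 = z₂ := by
      have := hcf 0 le_rfl
      rw [add_zero, Phi_neg] at this
      have : Phi (cf 0) = 1 - α / 2 := by linarith
      exact Phi_strictMono.injective (this.trans hz₂.symm)
    refine ⟨h0, ?_⟩
    have hαval : Phi (-z₁) = α := by rw [Phi_neg, hz₁]; ring
    have hlb : ∀ s : ℝ, 0 ≤ s → z₁ ≤ cf s := by
      intro s hs
      have h := hcf s hs
      have hle : Phi (-cf s) ≤ α := by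
        have := Phi_le_one (cf s + s); linarith
      have : Phi (-cf s) ≤ Phi (-z₁) := by rw [hαval]; exact hle
      have := Phi_strictMono.le_iff_le.mp this
      linarith
    rw [tendsto_order]
    constructor
    · intro a ha
      filter_upwards [eventually_ge_atTop (0:ℝ)] with s hs
      exact lt_of_lt_of_le ha (hlb s hs)
    · intro a ha
      have haux : Tendsto (fun s : ℝ => Phi (z₁ + s) - (1 - α)) atTop (nhds α) := by
        have h1 : Tendsto (fun s : ℝ => Phi (z₁ + s)) atTop (nhds 1) :=
          Phi_tendsto_atTop.comp (tendsto_atTop_add_const_left _ z₁ tendsto_id)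
        have := h1.sub (tendsto_const_nhds (x := 1 - α))
        simpa using this
      have hPa : Phi (-a) < α := by
        rw [← hαval]; exact Phi_strictMono (by linarith)
      filter_upwards [haux.eventually (eventually_gt_nhds hPa), eventually_ge_atTop (0:ℝ)]
        with s hgt hs
      have h := hcf s hs
      have hmon : Phi (z₁ + s) ≤ Phi (cf s + s) :=
        Phi_strictMono.monotone (by have := hlb s hs; linarith)
      have : Phi (-a) < Phi (-cf s) := by linarith
      have := Phi_strictMono.lt_iff_lt.mp this
      linarith
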